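/- Define F(x) = (-½log(2-eˣ) + ¼(e^{2x}-1)) ∘ (1+2x-eˣ)^{⟨-1⟩}, where (1+2x-eˣ)^{⟨-1⟩} denotes the compositional inverse of the power series 1+2x-eˣ = x - x²/2 - x³/6 - ⋯. Then the coefficients |Γ⁰_{1,n}| defined by F(x) = ∑_{n≥1}|Γ⁰_{1,n}|xⁿ/n! satisfy |Γ⁰_{1,1}| = 1, |Γ⁰_{1,2}| = 3, |Γ⁰_{1,3}| = 15, |Γ⁰_{1,4}| = 111. -/

import Mathlib

open PowerSeries

/-- Composition `f(g)` of formal power series, intended for `g` with zero constant term. -/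
noncomputable def pscomp {R : Type*} [CommRing R] (f g : PowerSeries R) : PowerSeries R :=
  PowerSeries.mk fun n => ∑ k ∈ Finset.range (n + 1), coeff (R := R) k f * coeff (R := R) n (g ^ k)

lemma coeff_pscomp {R : Type*} [CommRing R] (f g : PowerSeries R) (n : ℕ) :
    coeff (R := R) n (pscomp f g) = ∑ k ∈ Finset.range (n + 1), coeff (R := R) k f * coeff (R := R) n (g ^ k) := by
  simp [pscomp]

section Pow
variable (f : PowerSeries ℚ) (h0 : coeff (R := ℚ) 0 f = 0)
include h0

lemma pw2 (n : ℕ) : coeff (R := ℚ) n (f^2) =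
    ∑ k ∈ Finset.range (n+1), coeff (R := ℚ) k f * coeff (R := ℚ) (n-k) f := by
  rw [sq, coeff_mul, Finset.Nat.sum_antidiagonal_eq_sum_range_succ_mk]

lemma c12 : coeff (R := ℚ) 1 (f^2) = 0 := by
  rw [pw2 f h0]; simp [Finset.sum_range_succ, h0]

lemma c22 : coeff (R := ℚ) 2 (f^2) = coeff (R := ℚ) 1 f * coeff (R := ℚ) 1 f := by
  rw [pw2 f h0]; simp [Finset.sum_range_succ, h0]

lemma c32 : coeff (R := ℚ) 3 (f^2) = 2 * (coeff (R := ℚ) 1 f * coeff (R := ℚ) 2 f) := by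
  rw [pw2 f h0]; simp [Finset.sum_range_succ, h0]; ring

lemma c42 : coeff (R := ℚ) 4 (f^2) = 2 * (coeff (R := ℚ) 1 f * coeff (R := ℚ) 3 f) + coeff (R := ℚ) 2 f * coeff (R := ℚ) 2 f := by
  rw [pw2 f h0]; simp [Finset.sum_range_succ, h0]; ring

lemma c02 : coeff (R := ℚ) 0 (f^2) = 0 := by
  rw [pw2 f h0]; simp [h0]

lemma pw3 (n : ℕ) : coeff (R := ℚ) n (f^3) =
    ∑ k ∈ Finset.range (n+1), coeff (R := ℚ) k (f^2) * coeff (R := ℚ) (n-k) f := by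
  rw [pow_succ, coeff_mul, Finset.Nat.sum_antidiagonal_eq_sum_range_succ_mk]

lemma c33 : coeff (R := ℚ) 3 (f^3) = coeff (R := ℚ) 1 f ^ 3 := by
  rw [pw3 f h0]
  simp [Finset.sum_range_succ, h0, c02 f h0, c12 f h0, c22 f h0]; ring

lemma c43 : coeff (R := ℚ) 4 (f^3) = 3 * (coeff (R := ℚ) 1 f ^ 2 * coeff (R := ℚ) 2 f) := by
  rw [pw3 f h0]
  simp [Finset.sum_range_succ, h0, c02 f h0, c12 f h0, c22 f h0, c32 f h0]; ring

lemma c03 : coeff (R := ℚ) 0 (f^3) = 0 := by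
  rw [pw3 f h0]; simp [h0]

lemma c13 : coeff (R := ℚ) 1 (f^3) = 0 := by
  rw [pw3 f h0]; simp [Finset.sum_range_succ, h0, c02 f h0, c12 f h0]

lemma c23 : coeff (R := ℚ) 2 (f^3) = 0 := by
  rw [pw3 f h0]; simp [Finset.sum_range_succ, h0, c02 f h0, c12 f h0]

lemma c44 : coeff (R := ℚ) 4 (f^4) = coeff (R := ℚ) 1 f ^ 4 := by
  rw [show (4:ℕ) = 3+1 from rfl, pow_succ, coeff_mul,
    Finset.Nat.sum_antidiagonal_eq_sum_range_succ_mk]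
  simp [Finset.sum_range_succ, h0, c03 f h0, c13 f h0, c23 f h0, c33 f h0]
  ring
end Pow


/-- The series `log(1-x) = -∑_{n≥1} xⁿ/n`. -/
noncomputable def logOneSub : PowerSeries ℚ :=
  PowerSeries.mk fun n => if n = 0 then 0 else -(1 : ℚ) / n

/-- `u := 1 + 2x - eˣ`, a power series with zero constant term and unit linear
coefficient. -/
noncomputable def u : PowerSeries ℚ := 1 + 2 * X - PowerSeries.exp ℚ

/-- `G := -½·log(2-eˣ) + ¼·(e^{2x} - 1)`, where `log(2-eˣ) = log(1-(eˣ-1))`. -/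
noncomputable def G : PowerSeries ℚ :=
  PowerSeries.C (R := ℚ) (-(1 / 2)) * pscomp logOneSub (PowerSeries.exp ℚ - 1) +
    PowerSeries.C (R := ℚ) (1 / 4) * (pscomp (PowerSeries.exp ℚ) (2 * X) - 1)

/-- If `h` is the compositional inverse of `u = 1 + 2x - eˣ` and
`F = G ∘ h` with `G = -½log(2-eˣ) + ¼(e^{2x}-1)`, then the coefficients
`|Γ⁰_{1,n}|` of `xⁿ/n!` in `F` satisfy `|Γ⁰_{1,1}| = 1`, `|Γ⁰_{1,2}| = 3`,
`|Γ⁰_{1,3}| = 15`, `|Γ⁰_{1,4}| = 111`. -/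
lemma c2const (n : ℕ) : coeff (R := ℚ) n (2 : PowerSeries ℚ) = if n = 0 then 2 else 0 := by
  rw [← map_ofNat (C (R := ℚ)) 2, coeff_C]

lemma cu0 : coeff (R := ℚ) 0 u = 0 := by norm_num [u, coeff_exp, coeff_X, Nat.factorial, coeff_mul, Finset.Nat.sum_antidiagonal_eq_sum_range_succ_mk, Finset.sum_range_succ, c2const]
lemma cu1 : coeff (R := ℚ) 1 u = 1 := by norm_num [u, coeff_exp, coeff_X, Nat.factorial, coeff_mul, Finset.Nat.sum_antidiagonal_eq_sum_range_succ_mk, Finset.sum_range_succ, c2const]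
lemma cu2 : coeff (R := ℚ) 2 u = -(1/2) := by norm_num [u, coeff_exp, coeff_X, Nat.factorial, coeff_mul, Finset.Nat.sum_antidiagonal_eq_sum_range_succ_mk, Finset.sum_range_succ, c2const]
lemma cu3 : coeff (R := ℚ) 3 u = -(1/6) := by norm_num [u, coeff_exp, coeff_X, Nat.factorial, coeff_mul, Finset.Nat.sum_antidiagonal_eq_sum_range_succ_mk, Finset.sum_range_succ, c2const]
lemma cu4 : coeff (R := ℚ) 4 u = -(1/24) := by norm_num [u, coeff_exp, coeff_X, Nat.factorial, coeff_mul, Finset.Nat.sum_antidiagonal_eq_sum_range_succ_mk, Finset.sum_range_succ, c2const]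

lemma cE0 : coeff (R := ℚ) 0 (exp ℚ - 1) = 0 := by norm_num [coeff_exp]
lemma cE1 : coeff (R := ℚ) 1 (exp ℚ - 1) = 1 := by norm_num [coeff_exp]
lemma cE2 : coeff (R := ℚ) 2 (exp ℚ - 1) = 1/2 := by norm_num [coeff_exp]
lemma cE3 : coeff (R := ℚ) 3 (exp ℚ - 1) = 1/6 := by norm_num [coeff_exp, Nat.factorial]
lemma cE4 : coeff (R := ℚ) 4 (exp ℚ - 1) = 1/24 := by norm_num [coeff_exp, Nat.factorial]

lemma cT0 : coeff (R := ℚ) 0 (2 * X : PowerSeries ℚ) = 0 := by norm_num [coeff_X, coeff_mul, Finset.Nat.sum_antidiagonal_eq_sum_range_succ_mk, Finset.sum_range_succ, c2const]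
lemma cT1 : coeff (R := ℚ) 1 (2 * X : PowerSeries ℚ) = 2 := by norm_num [coeff_X, coeff_mul, Finset.Nat.sum_antidiagonal_eq_sum_range_succ_mk, Finset.sum_range_succ, c2const]
lemma cT2 : coeff (R := ℚ) 2 (2 * X : PowerSeries ℚ) = 0 := by norm_num [coeff_X, coeff_mul, Finset.Nat.sum_antidiagonal_eq_sum_range_succ_mk, Finset.sum_range_succ, c2const]
lemma cT3 : coeff (R := ℚ) 3 (2 * X : PowerSeries ℚ) = 0 := by norm_num [coeff_X, coeff_mul, Finset.Nat.sum_antidiagonal_eq_sum_range_succ_mk, Finset.sum_range_succ, c2const]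
lemma cT4 : coeff (R := ℚ) 4 (2 * X : PowerSeries ℚ) = 0 := by norm_num [coeff_X, coeff_mul, Finset.Nat.sum_antidiagonal_eq_sum_range_succ_mk, Finset.sum_range_succ, c2const]

lemma cl (n : ℕ) : coeff (R := ℚ) n logOneSub = if n = 0 then 0 else -(1:ℚ)/n := by simp [logOneSub]

lemma gG1 : coeff (R := ℚ) 1 G = 1 := by
  simp only [G, map_add, coeff_C_mul, map_sub, coeff_pscomp, Finset.sum_range_succ,
    Finset.sum_range_zero, cl, coeff_exp, pow_zero, pow_one, coeff_one,
    cE1, cT1]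
  norm_num

lemma gG2 : coeff (R := ℚ) 2 G = 1 := by
  simp only [G, map_add, coeff_C_mul, map_sub, coeff_pscomp, Finset.sum_range_succ,
    Finset.sum_range_zero, cl, coeff_exp, pow_zero, pow_one, coeff_one,
    cE1, cE2, cT1, cT2, c22 _ cE0, c22 _ cT0]
  norm_num

lemma gG3 : coeff (R := ℚ) 3 G = 5/6 := by
  simp only [G, map_add, coeff_C_mul, map_sub, coeff_pscomp, Finset.sum_range_succ,
    Finset.sum_range_zero, cl, coeff_exp, pow_zero, pow_one, coeff_one,
    cE1, cE2, cE3, cT1, cT2, cT3, c32 _ cE0, c32 _ cT0, c33 _ cE0, c33 _ cT0]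
  norm_num [Nat.factorial]

lemma gG4 : coeff (R := ℚ) 4 G = 17/24 := by
  simp only [G, map_add, coeff_C_mul, map_sub, coeff_pscomp, Finset.sum_range_succ,
    Finset.sum_range_zero, cl, coeff_exp, pow_zero, pow_one, coeff_one,
    cE1, cE2, cE3, cE4, cT1, cT2, cT3, cT4, c42 _ cE0, c42 _ cT0, c43 _ cE0, c43 _ cT0,
    c44 _ cE0, c44 _ cT0]
  norm_num [Nat.factorial]

theorem necklace_graph_counts (h F : PowerSeries ℚ)
    (hh0 : constantCoeff (R := ℚ) h = 0)
    (hinv₁ : pscomp u h = X) (hinv₂ : pscomp h u = X)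
    (hF : F = pscomp G h) :
    coeff (R := ℚ) 1 F = 1 ∧
    (2 : ℚ) * coeff (R := ℚ) 2 F = 3 ∧
    (6 : ℚ) * coeff (R := ℚ) 3 F = 15 ∧
    (24 : ℚ) * coeff (R := ℚ) 4 F = 111 := by
  have h0 : coeff (R := ℚ) 0 h = 0 := by rwa [coeff_zero_eq_constantCoeff]
  set a1 := coeff (R := ℚ) 1 h with ha1
  set a2 := coeff (R := ℚ) 2 h with ha2
  set a3 := coeff (R := ℚ) 3 h with ha3
  set a4 := coeff (R := ℚ) 4 h with ha4
  have E1 := congrArg (coeff (R := ℚ) 1) hinv₁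
  have E2 := congrArg (coeff (R := ℚ) 2) hinv₁
  have E3 := congrArg (coeff (R := ℚ) 3) hinv₁
  have E4 := congrArg (coeff (R := ℚ) 4) hinv₁
  simp only [coeff_pscomp, Finset.sum_range_succ, Finset.sum_range_zero, pow_zero, pow_one,
    coeff_one, cu0, cu1, cu2, cu3, cu4, c22 _ h0, c32 _ h0, c42 _ h0, c33 _ h0, c43 _ h0,
    c44 _ h0, coeff_X, ← ha1, ← ha2, ← ha3, ← ha4] at E1 E2 E3 E4
  norm_num at E1 E2 E3 E4
  have va1 : a1 = 1 := by linarith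
  have va2 : a2 = 1/2 := by nlinarith [E2, va1]
  have va3 : a3 = 2/3 := by nlinarith [E3, va1, va2]
  have va4 : a4 = 13/12 := by nlinarith [E4, va1, va2, va3]
  have F1 := congrArg (coeff (R := ℚ) 1) hF
  have F2 := congrArg (coeff (R := ℚ) 2) hF
  have F3 := congrArg (coeff (R := ℚ) 3) hF
  have F4 := congrArg (coeff (R := ℚ) 4) hF
  simp only [coeff_pscomp, Finset.sum_range_succ, Finset.sum_range_zero, pow_zero, pow_one,
    coeff_one, gG1, gG2, gG3, gG4, c22 _ h0, c32 _ h0, c42 _ h0, c33 _ h0, c43 _ h0,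
    c44 _ h0, ← ha1, ← ha2, ← ha3, ← ha4] at F1 F2 F3 F4
  norm_num at F1 F2 F3 F4
  rw [va1] at F1 F2 F3 F4
  rw [va2] at F2 F3 F4
  rw [va3] at F3 F4
  rw [va4] at F4
  norm_num at F2 F3 F4
  rw [F1]
  refine ⟨by linarith, by linarith, by linarith, by linarith⟩
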